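/- The multinomial coefficient Q_n = N! / ∏_{i=1}^M (n_i!) is strictly Schur-concave on vectors of nonnegative integers summing to N: if n and m are nonincreasing integer vectors with ∑ n_i = ∑ m_i = N and n is strictly majorized by m (n ≺ m and n is not a permutation of m), then Q_n > Q_m. -/

import Mathlib

open Finset

/-- `x` is majorized by `y`: all partial sums of `x` are dominated by those of `y`,
and the total sums agree. -/
def Maj {M : ℕ} (x y : Fin M → ℕ) : Prop :=
  (∀ k : ℕ, k < M → ∑ i ∈ univ.filter (fun i : Fin M => (i : ℕ) < k), x i ≤
      ∑ i ∈ univ.filter (fun i : Fin M => (i : ℕ) < k), y i) ∧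
    ∑ i, x i = ∑ i, y i

/-- The multinomial coefficient `Q_n = N! / ∏ i (n i)!`. -/
def Q {M : ℕ} (N : ℕ) (n : Fin M → ℕ) : ℕ :=
  Nat.factorial N / ∏ i, Nat.factorial (n i)

namespace MSC

variable {M : ℕ}

/-- partial sum -/
def S (x : Fin M → ℕ) (k : ℕ) : ℕ :=
  ∑ i ∈ univ.filter (fun i : Fin M => (i : ℕ) < k), x i

/-- product of factorials -/
def Pf (x : Fin M → ℕ) : ℕ := ∏ i, Nat.factorial (x i)

/-- induction measure -/
def meas (n m : Fin M → ℕ) : ℕ := ∑ k ∈ range M, (S m k - S n k)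

lemma Pf_pos (x : Fin M → ℕ) : 0 < Pf x :=
  Finset.prod_pos fun i _ => Nat.factorial_pos _

lemma S_succ (x : Fin M → ℕ) (k : ℕ) (hk : k < M) :
    S x (k + 1) = S x k + x ⟨k, hk⟩ := by
  unfold S
  have h : univ.filter (fun i : Fin M => (i : ℕ) < k + 1)
      = insert ⟨k, hk⟩ (univ.filter (fun i : Fin M => (i : ℕ) < k)) := by
    ext i
    simp [Nat.lt_succ_iff_lt_or_eq, Fin.ext_iff, or_comm]; omega
  rw [h, sum_insert (by simp)]
  ring

lemma S_ge (x : Fin M → ℕ) (k : ℕ) (hk : M ≤ k) : S x k = ∑ i, x i := by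
  unfold S
  congr 1
  apply Finset.filter_true_of_mem
  intro i _
  exact lt_of_lt_of_le i.isLt hk

lemma key (n m : Fin M → ℕ) (hn : Antitone n) (hmaj : Maj n m) (hne : n ≠ m) :
    ∃ m' : Fin M → ℕ, Maj n m' ∧ Pf m' < Pf m ∧ meas n m' < meas n m := by
  obtain ⟨hS, hsum⟩ := hmaj
  -- generalized partial sum inequality, valid for all k
  have hS' : ∀ k : ℕ, S n k ≤ S m k := by
    intro k
    rcases lt_or_ge k M with h | h
    · exact hS k h
    · rw [S_ge n k h, S_ge m k h, hsum]
  classical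
  -- first disagreement index i
  set A : Finset (Fin M) := univ.filter (fun l => n l ≠ m l) with hA
  have hAne : A.Nonempty := by
    by_contra h
    apply hne
    funext l
    rw [Finset.not_nonempty_iff_eq_empty, Finset.filter_eq_empty_iff] at h
    have := h (Finset.mem_univ l)
    simpa using this
  set i : Fin M := A.min' hAne with hi
  have hiA : i ∈ A := A.min'_mem hAne
  have hi_ne : n i ≠ m i := by simpa [hA] using hiA
  have hlt_i : ∀ l : Fin M, l < i → n l = m l := by
    intro l hl
    by_contra h
    have : i ≤ l := A.min'_le l (by simp [hA, h])
    exact absurd hl (not_lt.mpr this)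
  have hSi : S n (i : ℕ) = S m (i : ℕ) := by
    unfold S
    apply Finset.sum_congr rfl
    intro l hl
    simp only [mem_filter] at hl
    exact hlt_i l (by exact_mod_cast hl.2)
  have hni : n i < m i := by
    have h1 : S n ((i : ℕ) + 1) ≤ S m ((i : ℕ) + 1) := hS' _
    rw [S_succ n (i : ℕ) i.isLt, S_succ m (i : ℕ) i.isLt] at h1
    simp only [Fin.eta] at h1
    omega
  -- first index j > i with m j < n j
  set B : Finset (Fin M) := univ.filter (fun l => i < l ∧ m l < n l) with hB
  have hBne : B.Nonempty := by
    by_contra h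
    rw [Finset.not_nonempty_iff_eq_empty, Finset.filter_eq_empty_iff] at h
    have hle : ∀ l : Fin M, n l ≤ m l := by
      intro l
      rcases lt_trichotomy l i with h' | h' | h'
      · exact le_of_eq (hlt_i l h')
      · subst h'; exact hni.le
      · have := h (Finset.mem_univ l)
        simp only [not_and, not_lt] at this
        exact this h'
    have : ∑ l, n l < ∑ l, m l :=
      Finset.sum_lt_sum (fun l _ => hle l) ⟨i, Finset.mem_univ i, hni⟩
    omega
  set j : Fin M := B.min' hBne with hj
  have hjB : j ∈ B := B.min'_mem hBne
  have hjB' : i < j ∧ m j < n j := by simpa [hB] using hjB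
  have hij : i < j := hjB'.1
  have hmj : m j < n j := hjB'.2
  have hbetween : ∀ l : Fin M, i < l → l < j → n l ≤ m l := by
    intro l h1 h2
    by_contra h
    have : j ≤ l := B.min'_le l (by simp [hB, h1]; omega)
    exact absurd h2 (not_lt.mpr this)
  have hij2 : m j + 2 ≤ m i := by
    have h1 : n j ≤ n i := hn hij.le
    omega
  have hij_ne : i ≠ j := ne_of_lt hij
  set m' : Fin M → ℕ :=
    Function.update (Function.update m i (m i - 1)) j (m j + 1) with hm'
  have hm'i : m' i = m i - 1 := by
    rw [hm', Function.update_of_ne hij_ne, Function.update_self]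
  have hm'j : m' j = m j + 1 := by
    rw [hm', Function.update_self]
  have hm'other : ∀ l : Fin M, l ≠ i → l ≠ j → m' l = m l := by
    intro l h1 h2
    rw [hm', Function.update_of_ne h2, Function.update_of_ne h1]
  -- partial sums of m'
  have ha : ∀ k : ℕ, k ≤ (i : ℕ) → S m' k = S m k := by
    intro k hk
    unfold S
    apply Finset.sum_congr rfl
    intro l hl
    simp only [mem_filter] at hl
    have hli : (l : ℕ) < (i : ℕ) := lt_of_lt_of_le hl.2 hk
    exact hm'other l (Fin.ne_of_lt hli) (Fin.ne_of_lt (lt_trans hli hij))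
  have hb : ∀ k : ℕ, (i : ℕ) < k → k ≤ (j : ℕ) → S m' k + 1 = S m k := by
    intro k hk1 hk2
    set s := univ.filter (fun l : Fin M => (l : ℕ) < k) with hs
    have hjs : j ∉ s := by simp [hs]; omega
    have his : i ∈ s := by simp [hs]; omega
    have e0 : S m k = m i + ∑ l ∈ s.erase i, m l := (Finset.add_sum_erase s m his).symm
    have e1 : S m' k = (m i - 1) + ∑ l ∈ s.erase i, m l := by
      have estep : S m' k = ∑ l ∈ s, Function.update m i (m i - 1) l := by
        apply Finset.sum_congr rfl
        intro l hl
        rw [hm', Function.update_of_ne (by rintro rfl; exact hjs hl)]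
      rw [estep, Finset.sum_update_of_mem his, ← Finset.erase_eq]
    omega
  have hc : ∀ k : ℕ, (j : ℕ) < k → S m' k = S m k := by
    intro k hk
    set s := univ.filter (fun l : Fin M => (l : ℕ) < k) with hs
    have hjs : j ∈ s := by simp [hs]; omega
    have his : i ∈ s.erase j := by
      rw [Finset.mem_erase]
      refine ⟨hij_ne, by simp [hs]; omega⟩
    have e0 : S m k = m j + (m i + ∑ l ∈ (s.erase j).erase i, m l) := by
      rw [Finset.add_sum_erase _ m his, Finset.add_sum_erase s m hjs]
      rfl
    have e0' : S m k = ∑ l ∈ s, m l := rfl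
    have e1 : S m' k = (m j + 1) + ((m i - 1) + ∑ l ∈ (s.erase j).erase i, m l) := by
      show (∑ l ∈ s, m' l) = _
      rw [hm', Finset.sum_update_of_mem hjs, ← Finset.erase_eq,
        Finset.sum_update_of_mem his, ← Finset.erase_eq]
    omega
  -- strict gap on (i, j]
  have hd : ∀ k : ℕ, (i : ℕ) < k → k ≤ (j : ℕ) → S n k < S m k := by
    have base : S n ((i : ℕ) + 1) < S m ((i : ℕ) + 1) := by
      rw [S_succ n (i : ℕ) i.isLt, S_succ m (i : ℕ) i.isLt]
      simp only [Fin.eta]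
      omega
    intro k hk1 hk2
    induction k with
    | zero => omega
    | succ k ih =>
      rcases Nat.lt_or_ge (i : ℕ) k with h | h
      · -- k > i, so k+1 ≥ i+2; index k is strictly between i and j
        have hkM : k < M := lt_trans (lt_of_lt_of_le (Nat.lt_of_succ_le hk2) (le_refl _)) j.isLt
        have hkj : k < (j : ℕ) := Nat.lt_of_succ_le hk2
        have hl : n ⟨k, hkM⟩ ≤ m ⟨k, hkM⟩ := by
          apply hbetween ⟨k, hkM⟩
          · exact h
          · exact hkj
        have ihk := ih h hkj.le
        rw [S_succ n k hkM, S_succ m k hkM]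
        omega
      · have : k = (i : ℕ) := by omega
        subst this
        exact base
  -- Maj n m'
  have hmaj' : Maj n m' := by
    constructor
    · intro k hk
      show S n k ≤ S m' k
      rcases Nat.le_total k (i : ℕ) with h | h
      · rw [ha k h]; exact hS k hk
      · rcases Nat.le_total k (j : ℕ) with h2 | h2
        · rcases Nat.eq_or_lt_of_le h with h3 | h3
          · rw [ha k h3.symm.le]; exact hS k hk
          · have := hb k h3 h2
            have := hd k h3 h2
            omega
        · rcases Nat.eq_or_lt_of_le h2 with h3 | h3
          · subst h3
            have := hb (j : ℕ) (by exact_mod_cast hij) le_rfl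
            have := hd (j : ℕ) (by exact_mod_cast hij) le_rfl
            omega
          · rw [hc k h3]; exact hS k hk
    · have h1 : S m' M = S m M := hc M j.isLt
      rw [S_ge m' M le_rfl, S_ge m M le_rfl] at h1
      rw [hsum, h1]
  -- product of factorials decreases
  have hR : Pf m' * m i = Pf m * (m j + 1) := by
    have hjmem : j ∈ (univ : Finset (Fin M)) := Finset.mem_univ j
    have himem : i ∈ (univ : Finset (Fin M)).erase j :=
      Finset.mem_erase.mpr ⟨hij_ne, Finset.mem_univ i⟩
    have e1 : Pf m' = (m' j).factorial * ((m' i).factorial *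
        ∏ l ∈ ((univ : Finset (Fin M)).erase j).erase i, (m' l).factorial) := by
      unfold Pf
      rw [← Finset.mul_prod_erase univ (fun l => Nat.factorial (m' l)) hjmem,
        ← Finset.mul_prod_erase _ (fun l => Nat.factorial (m' l)) himem]
    have e2 : Pf m = (m j).factorial * ((m i).factorial *
        ∏ l ∈ ((univ : Finset (Fin M)).erase j).erase i, (m l).factorial) := by
      unfold Pf
      rw [← Finset.mul_prod_erase univ (fun l => Nat.factorial (m l)) hjmem,
        ← Finset.mul_prod_erase _ (fun l => Nat.factorial (m l)) himem]
    have e3 : ∏ l ∈ ((univ : Finset (Fin M)).erase j).erase i, (m' l).factorial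
        = ∏ l ∈ ((univ : Finset (Fin M)).erase j).erase i, (m l).factorial := by
      apply Finset.prod_congr rfl
      intro l hl
      rw [Finset.mem_erase, Finset.mem_erase] at hl
      rw [hm'other l hl.1 hl.2.1]
    rw [e1, e2, e3, hm'i, hm'j]
    have f1 : (m i).factorial = m i * (m i - 1).factorial := by
      conv_lhs => rw [show m i = (m i - 1) + 1 from by omega]
      rw [Nat.factorial_succ, show m i - 1 + 1 = m i from by omega]
    have f2 : (m j + 1).factorial = (m j + 1) * (m j).factorial := Nat.factorial_succ _
    rw [f1, f2]
    ring
  have hPf : Pf m' < Pf m := by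
    have h1 : Pf m' * m i < Pf m * m i := by
      rw [hR]
      exact mul_lt_mul_of_pos_left (by omega) (Pf_pos m)
    exact Nat.lt_of_mul_lt_mul_right h1
  -- measure decreases
  have hmeas : meas n m' < meas n m := by
    unfold meas
    apply Finset.sum_lt_sum
    · intro k hk
      have hle : S m' k ≤ S m k := by
        rcases Nat.le_total k (i : ℕ) with h | h
        · rw [ha k h]
        · rcases Nat.le_total k (j : ℕ) with h2 | h2
          · rcases Nat.eq_or_lt_of_le h with h3 | h3
            · rw [ha k h3.symm.le]
            · have := hb k h3 h2
              omega
          · rcases Nat.eq_or_lt_of_le h2 with h3 | h3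
            · subst h3
              have := hb (j : ℕ) (by exact_mod_cast hij) le_rfl
              omega
            · rw [hc k h3]
      omega
    · refine ⟨(j : ℕ), Finset.mem_range.mpr j.isLt, ?_⟩
      have h1 := hb (j : ℕ) (by exact_mod_cast hij) le_rfl
      have h2 := hd (j : ℕ) (by exact_mod_cast hij) le_rfl
      omega
  exact ⟨m', hmaj', hPf, hmeas⟩

lemma weak : ∀ (t : ℕ) (n m : Fin M → ℕ), Antitone n → Maj n m →
    meas n m ≤ t → Pf n ≤ Pf m := by
  intro t
  induction t with
  | zero =>
    intro n m hn hmaj ht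
    by_cases h : n = m
    · subst h; exact le_refl _
    · obtain ⟨m', _, _, hmeas⟩ := key n m hn hmaj h
      omega
  | succ t ih =>
    intro n m hn hmaj ht
    by_cases h : n = m
    · subst h; exact le_refl _
    · obtain ⟨m', hmaj', hPf, hmeas⟩ := key n m hn hmaj h
      have := ih n m' hn hmaj' (by omega)
      omega

lemma strict (n m : Fin M → ℕ) (hn : Antitone n) (hmaj : Maj n m) (hne : n ≠ m) :
    Pf n < Pf m := by
  obtain ⟨m', hmaj', hPf, _⟩ := key n m hn hmaj hne
  have := weak (meas n m') n m' hn hmaj' le_rfl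
  omega

end MSC

theorem multinomial_strict_schur_concave {M N : ℕ} (n m : Fin M → ℕ)
    (hn : Antitone n) (hm : Antitone m)
    (hns : ∑ i, n i = N) (hms : ∑ i, m i = N)
    (hmaj : Maj n m)
    (hperm : ¬ ∃ σ : Equiv.Perm (Fin M), ∀ i, n i = m (σ i)) :
    Q N n > Q N m := by
  have hne : n ≠ m := by
    rintro rfl
    exact hperm ⟨Equiv.refl _, fun i => rfl⟩
  have hPf : MSC.Pf n < MSC.Pf m := MSC.strict n m hn hmaj hne
  have hdn : MSC.Pf n ∣ N.factorial := by
    have := Nat.prod_factorial_dvd_factorial_sum univ n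
    rwa [hns] at this
  have hdm : MSC.Pf m ∣ N.factorial := by
    have := Nat.prod_factorial_dvd_factorial_sum univ m
    rwa [hms] at this
  have hPn : 0 < MSC.Pf n := MSC.Pf_pos n
  have hNpos : 0 < N.factorial := Nat.factorial_pos N
  have e1 : N.factorial / MSC.Pf n * MSC.Pf n = N.factorial := Nat.div_mul_cancel hdn
  have e2 : N.factorial / MSC.Pf m * MSC.Pf m = N.factorial := Nat.div_mul_cancel hdm
  show N.factorial / MSC.Pf m < N.factorial / MSC.Pf n
  have hqm : 0 < N.factorial / MSC.Pf m := by
    rcases Nat.eq_zero_or_pos (N.factorial / MSC.Pf m) with h | h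
    · rw [h] at e2; simp at e2; omega
    · exact h
  have h1 : N.factorial / MSC.Pf m * MSC.Pf n < N.factorial / MSC.Pf n * MSC.Pf n := by
    calc N.factorial / MSC.Pf m * MSC.Pf n
        < N.factorial / MSC.Pf m * MSC.Pf m := by
          exact mul_lt_mul_of_pos_left hPf hqm
      _ = N.factorial := e2
      _ = N.factorial / MSC.Pf n * MSC.Pf n := e1.symm
  exact Nat.lt_of_mul_lt_mul_right h1
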